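/- Let p̄_k(x,v) be defined by (1+λ)^{v+1/2} exp(xλ + (v/2)λ²) = ∑_{k≥0} p̄_k(x,v)λ^k, and p_k(x,n) by (1+λ)^{n} e^{xλ} = ∑ p_k λ^k with n = v + 1/2. Then each p̄_k is a finite linear combination of p_k, p_{k-2}, p_{k-4}, …, and consequently the N×N determinants det(p̄_{N-2i+j+1})_{i,j} and det(p_{N-2i+j+1})_{i,j} are equal, i.e. τ_N(x, v+1/2) = det(p̄_{N-2i+j+1}(x,v))_{1≤i,j≤N}. -/

import Mathlib

/-- Generalized binomial coefficient `binom(n, m)` for real `n`. -/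
noncomputable def genBinom (n : ℝ) (m : ℕ) : ℝ :=
  (∏ i ∈ Finset.range m, (n - i)) / (m.factorial : ℝ)

/-- The polynomials `p_k(x,n)` with `(1+λ)^n e^{xλ} = ∑ p_k λ^k`, `p_k = 0` for `k < 0`. -/
noncomputable def pP (n : ℝ) (k : ℤ) (x : ℝ) : ℝ :=
  if k < 0 then 0 else
    ∑ j ∈ Finset.range (k.toNat + 1), genBinom n (k.toNat - j) * x ^ j / (j.factorial : ℝ)

/-- `τ_N = det(p_{N-2(i-1)+(j-1)})_{1≤i,j≤N}`, `τ_0 = τ_{-1} = 1`. -/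
noncomputable def tauP (n : ℝ) (N : ℤ) (x : ℝ) : ℝ :=
  if N ≤ 0 then 1 else
    Matrix.det (Matrix.of fun i j : Fin N.toNat =>
      pP n (N - 2 * ((i : ℕ) : ℤ) + ((j : ℕ) : ℤ)) x)

/-- `p̄_k(x,v)`: the coefficients of `(1+λ)^{v+1/2} exp(xλ + (v/2)λ²)`, explicitly
`p̄_k = ∑_{2m≤k} (v/2)^m/m! · ∑_{j=0}^{k-2m} binom(v+1/2, k-2m-j) x^j/j!`,
with `p̄_k = 0` for `k < 0`. -/
noncomputable def pbar (v : ℝ) (k : ℤ) (x : ℝ) : ℝ :=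
  if k < 0 then 0 else
    ∑ m ∈ Finset.range (k.toNat / 2 + 1),
      (v / 2) ^ m / (m.factorial : ℝ) *
        ∑ j ∈ Finset.range ((k.toNat - 2 * m) + 1),
          genBinom (v + 1 / 2) ((k.toNat - 2 * m) - j) * x ^ j / (j.factorial : ℝ)

/-- The coefficients in the expansion of `exp((v/2)λ²)`. -/
noncomputable def cfun (v : ℝ) (m : ℕ) : ℝ := (v / 2) ^ m / (m.factorial : ℝ)

lemma pP_neg (n : ℝ) (k : ℤ) (x : ℝ) (h : k < 0) : pP n k x = 0 := by
  simp [pP, h]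

lemma pbar_eq (v : ℝ) (k : ℕ) (x : ℝ) :
    pbar v (k : ℤ) x = ∑ m ∈ Finset.range (k / 2 + 1),
      cfun v m * pP (v + 1 / 2) ((k : ℤ) - 2 * m) x := by
  have hk : ¬ ((k : ℤ) < 0) := by omega
  rw [pbar, if_neg hk]
  simp only [Int.toNat_natCast]
  refine Finset.sum_congr rfl ?_
  intro m hm
  simp only [Finset.mem_range] at hm
  have hneg : ¬ ((k : ℤ) - 2 * m < 0) := by omega
  have ht : ((k : ℤ) - 2 * m).toNat = k - 2 * m := by omega
  rw [cfun, pP, if_neg hneg, ht]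

lemma pbar_big (v : ℝ) (k : ℤ) (M : ℕ) (hM : k < 2 * M) (x : ℝ) :
    pbar v k x = ∑ m ∈ Finset.range M, cfun v m * pP (v + 1 / 2) (k - 2 * m) x := by
  rcases lt_or_ge k 0 with h | h
  · rw [pbar, if_pos h]
    symm
    apply Finset.sum_eq_zero
    intro m _
    rw [pP_neg _ _ _ (by omega)]
    ring
  · obtain ⟨n, rfl⟩ := Int.eq_ofNat_of_zero_le h
    rw [pbar_eq]
    apply Finset.sum_subset
    · intro m hm
      simp only [Finset.mem_range] at hm ⊢
      omega
    · intro m _ hnm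
      simp only [Finset.mem_range] at hnm
      rw [pP_neg _ _ _ (by omega)]
      ring

/-- each `p̄_k` is a linear combination of `p_k, p_{k-2}, p_{k-4}, …`
(for `n = v + 1/2`), and consequently the Jacobi–Trudi determinants built from the `p̄`'s
and from the `p`'s coincide: `τ_N(x, v+1/2) = det(p̄_{N-2(i-1)+(j-1)}(x,v))`. -/
theorem pbar_combination_and_det (v : ℝ) :
    (∀ k : ℕ, ∃ c : ℕ → ℝ, ∀ x : ℝ,
        pbar v (k : ℤ) x =
          ∑ m ∈ Finset.range (k / 2 + 1), c m * pP (v + 1 / 2) ((k : ℤ) - 2 * m) x) ∧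
    (∀ N : ℕ, ∀ x : ℝ,
        Matrix.det (Matrix.of fun i j : Fin N =>
            pbar v ((N : ℤ) - 2 * ((i : ℕ) : ℤ) + ((j : ℕ) : ℤ)) x) =
          tauP (v + 1 / 2) (N : ℤ) x) := by
  constructor
  · intro k
    exact ⟨cfun v, fun x => pbar_eq v k x⟩
  · intro N x
    rcases Nat.eq_zero_or_pos N with hN | hN
    · subst hN
      simp [tauP, Matrix.det_isEmpty]
    · set A : Matrix (Fin N) (Fin N) ℝ :=
        Matrix.of fun i j : Fin N =>
          pP (v + 1 / 2) ((N : ℤ) - 2 * ((i : ℕ) : ℤ) + ((j : ℕ) : ℤ)) x with hA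
      set L : Matrix (Fin N) (Fin N) ℝ :=
        Matrix.of fun i i' : Fin N =>
          if (i : ℕ) ≤ (i' : ℕ) then cfun v ((i' : ℕ) - (i : ℕ)) else 0 with hL
      have htau : tauP (v + 1 / 2) (N : ℤ) x = A.det := by
        rw [tauP, if_neg (by omega)]
        rfl
      have hB : (Matrix.of fun i j : Fin N =>
          pbar v ((N : ℤ) - 2 * ((i : ℕ) : ℤ) + ((j : ℕ) : ℤ)) x) = L * A := by
        ext i j
        rw [Matrix.mul_apply]
        simp only [Matrix.of_apply, hL, hA]
        rw [pbar_big v _ N (by have := i.2; have := j.2; omega)]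
        rw [Fin.sum_univ_eq_sum_range
          (fun t => (if (i : ℕ) ≤ t then cfun v (t - (i : ℕ)) else 0) *
            pP (v + 1 / 2) ((N : ℤ) - 2 * (t : ℤ) + ((j : ℕ) : ℤ)) x) N]
        have h1 : ∑ t ∈ Finset.range N,
            (if (i : ℕ) ≤ t then cfun v (t - (i : ℕ)) else 0) *
              pP (v + 1 / 2) ((N : ℤ) - 2 * (t : ℤ) + ((j : ℕ) : ℤ)) x
            = ∑ t ∈ Finset.Ico (i : ℕ) N,
            (if (i : ℕ) ≤ t then cfun v (t - (i : ℕ)) else 0) *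
              pP (v + 1 / 2) ((N : ℤ) - 2 * (t : ℤ) + ((j : ℕ) : ℤ)) x := by
          symm
          apply Finset.sum_subset
          · intro t ht
            simp only [Finset.mem_Ico, Finset.mem_range] at ht ⊢
            omega
          · intro t ht hnt
            simp only [Finset.mem_Ico, Finset.mem_range] at ht hnt
            rw [if_neg (by omega)]
            ring
        have h2 : ∑ t ∈ Finset.Ico (i : ℕ) N,
            (if (i : ℕ) ≤ t then cfun v (t - (i : ℕ)) else 0) *
              pP (v + 1 / 2) ((N : ℤ) - 2 * (t : ℤ) + ((j : ℕ) : ℤ)) x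
            = ∑ m ∈ Finset.range (N - (i : ℕ)),
              cfun v m *
                pP (v + 1 / 2) ((N : ℤ) - 2 * ((i : ℕ) : ℤ) + ((j : ℕ) : ℤ) - 2 * m) x := by
          rw [Finset.sum_Ico_eq_sum_range]
          refine Finset.sum_congr rfl ?_
          intro m _
          rw [if_pos (Nat.le_add_right _ _)]
          congr 1
          · congr 1
            omega
          · congr 1
            push_cast
            ring
        rw [h1, h2]
        symm
        apply Finset.sum_subset
        · intro m hm
          simp only [Finset.mem_range] at hm ⊢
          omega
        · intro m hm hnm
          simp only [Finset.mem_range] at hm hnm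
          rw [pP_neg _ _ _ (by have := j.2; omega)]
          ring
      rw [hB, htau, Matrix.det_mul]
      have hLdet : L.det = 1 := by
        rw [Matrix.det_of_upperTriangular]
        · rw [hL]
          apply Finset.prod_eq_one
          intro i _
          simp [cfun]
        · intro i i' hii
          simp only [hL, Matrix.of_apply]
          rw [if_neg]
          exact not_le.mpr hii
      rw [hLdet, one_mul]
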